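/- Let G be a group with a left-invariant total order ≺, and let C be a ≺-convex subgroup of G. Suppose the restriction of ≺ to C is not isolated, i.e., for every finite subset S ⊆ C there exists a left-invariant total order on C that agrees with ≺ on S × S but differs from the restriction of ≺ to C. Then ≺ is not isolated among the left-invariant total orders of G: for every finite subset T ⊆ G there exists a left-invariant total order on G that agrees with ≺ on T × T but differs from ≺. -/

import Mathlib

/-- A left-invariant total order (left order) on a group `G`. -/
def IsLeftOrder {G : Type*} [Group G] (r : G → G → Prop) : Prop :=
  IsStrictTotalOrder G r ∧ ∀ h f g : G, r f g → r (h * f) (h * g)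

/-- A subgroup `C` is convex for `r` if `f ≺ g ≺ h` with `f, h ∈ C` implies `g ∈ C`. -/
def IsConvexSubgroup {G : Type*} [Group G] (r : G → G → Prop) (C : Subgroup G) : Prop :=
  ∀ f g h : G, f ∈ C → h ∈ C → r f g → r g h → g ∈ C

/-- Convex extension: if `C` is an `r`-convex subgroup of `G` and the restriction of
`r` to `C` is not isolated (every finite subset of `C` admits a left order on `C`
agreeing with `r` there but different from the restriction of `r`), then `r` itself
is not isolated among the left orders of `G`. -/
theorem stmt_4 {G : Type*} [Group G] (r : G → G → Prop) (hr : IsLeftOrder r)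
    (C : Subgroup G) (hC : IsConvexSubgroup r C)
    (hnotiso : ∀ S : Finset C, ∃ s : C → C → Prop, IsLeftOrder s ∧
      (∀ a ∈ S, ∀ b ∈ S, (s a b ↔ r (a : G) (b : G))) ∧
      s ≠ fun a b : C => r (a : G) (b : G)) :
    ∀ T : Finset G, ∃ r' : G → G → Prop, IsLeftOrder r' ∧
      (∀ a ∈ T, ∀ b ∈ T, (r' a b ↔ r a b)) ∧ r' ≠ r := by
  classical
  intro T
  -- invariance of r in both directions
  have hrinv : ∀ h f g : G, r f g ↔ r (h * f) (h * g) := by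
    intro h f g
    constructor
    · exact hr.2 h f g
    · intro H
      have := hr.2 h⁻¹ _ _ H
      simpa [mul_assoc] using this
  -- the finite set S in C
  set S : Finset C := insert (1 : C)
    ((T ×ˢ T).image (fun p => if h : p.1⁻¹ * p.2 ∈ C then (⟨p.1⁻¹ * p.2, h⟩ : C) else 1)) with hSdef
  obtain ⟨s, hs, hagree, hne⟩ := hnotiso S
  have hsinv : ∀ h f g : C, s f g ↔ s (h * f) (h * g) := by
    intro h f g
    constructor
    · exact hs.2 h f g
    · intro H
      have := hs.2 h⁻¹ _ _ H
      simpa [mul_assoc] using this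
  haveI hrS : IsStrictTotalOrder G r := hr.1
  haveI hsS : IsStrictTotalOrder C s := hs.1
  -- the new order
  set r' : G → G → Prop := fun f g =>
    (∃ h : f⁻¹ * g ∈ C, s 1 ⟨f⁻¹ * g, h⟩) ∨ (f⁻¹ * g ∉ C ∧ r f g) with hr'def
  have hr'iff : ∀ f g : G, f⁻¹ * g ∈ C → ∀ h : f⁻¹ * g ∈ C, (r' f g ↔ s 1 ⟨f⁻¹ * g, h⟩) := by
    intro f g hm h
    constructor
    · rintro (⟨h', hs'⟩ | ⟨hn, _⟩)
      · exact hs'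
      · exact absurd hm hn
    · intro hs'
      exact Or.inl ⟨h, hs'⟩
  have hr'iff' : ∀ f g : G, f⁻¹ * g ∉ C → (r' f g ↔ r f g) := by
    intro f g hm
    constructor
    · rintro (⟨h', _⟩ | ⟨_, hrfg⟩)
      · exact absurd h' hm
      · exact hrfg
    · intro h
      exact Or.inr ⟨hm, h⟩
  -- irreflexivity
  have hirr : ∀ f, ¬ r' f f := by
    intro f hf
    rcases hf with ⟨h, hs1⟩ | ⟨_, hrf⟩
    · have : (⟨f⁻¹ * f, h⟩ : C) = 1 := by ext; simp
      rw [this] at hs1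
      exact irrefl_of s 1 hs1
    · exact irrefl_of r f hrf
  -- transitivity
  have htr : ∀ f g h : G, r' f g → r' g h → r' f h := by
    intro f g h hfg hgh
    rcases hfg with ⟨m1, hs1⟩ | ⟨n1, hr1⟩
    · rcases hgh with ⟨m2, hs2⟩ | ⟨n2, hr2⟩
      · -- both in C
        have m3 : f⁻¹ * h ∈ C := by
          have := C.mul_mem m1 m2
          simpa [mul_assoc] using this
        refine Or.inl ⟨m3, ?_⟩
        have h2 : s ⟨f⁻¹*g, m1⟩ (⟨f⁻¹*g, m1⟩ * ⟨g⁻¹*h, m2⟩) := by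
          have := (hsinv ⟨f⁻¹*g, m1⟩ 1 ⟨g⁻¹*h, m2⟩).1 hs2
          simpa using this
        have heq : (⟨f⁻¹*g, m1⟩ * ⟨g⁻¹*h, m2⟩ : C) = ⟨f⁻¹*h, m3⟩ := by
          ext; simp [mul_assoc]
        rw [heq] at h2
        exact trans_of s hs1 h2
      · -- f⁻¹g ∈ C, g⁻¹h ∉ C
        have m3 : f⁻¹ * h ∉ C := by
          intro hm
          have : g⁻¹ * h ∈ C := by
            have := C.mul_mem (C.inv_mem m1) hm
            simpa [mul_assoc] using this
          exact n2 this
        refine Or.inr ⟨m3, ?_⟩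
        rcases trichotomous_of r f h with hfh | rfl | hhf
        · exact hfh
        · exact absurd (by simpa using C.one_mem) m3
        · exfalso
          have h1 : r 1 (g⁻¹ * h) := by
            have := (hrinv g⁻¹ g h).1 hr2
            simpa using this
          have h2 : r (g⁻¹ * h) (g⁻¹ * f) := (hrinv g⁻¹ h f).1 hhf
          exact n2 (hC 1 (g⁻¹ * h) (g⁻¹ * f) C.one_mem
            (by have := C.inv_mem m1; simpa [mul_inv_rev] using this) h1 h2)
    · rcases hgh with ⟨m2, hs2⟩ | ⟨n2, hr2⟩
      · -- f⁻¹g ∉ C, g⁻¹h ∈ C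
        have m3 : f⁻¹ * h ∉ C := by
          intro hm
          have h5 := C.mul_mem hm (C.inv_mem m2)
          have e : f⁻¹ * h * (g⁻¹ * h)⁻¹ = f⁻¹ * g := by group
          rw [e] at h5
          exact n1 h5
        refine Or.inr ⟨m3, ?_⟩
        rcases trichotomous_of r f h with hfh | rfl | hhf
        · exact hfh
        · exact absurd (by simpa using C.one_mem) m3
        · exfalso
          have h1 : r 1 (h⁻¹ * f) := by
            have := (hrinv h⁻¹ h f).1 hhf
            simpa using this
          have h2 : r (h⁻¹ * f) (h⁻¹ * g) := (hrinv h⁻¹ f g).1 hr1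
          have h6 : h⁻¹ * f ∈ C := hC 1 (h⁻¹ * f) (h⁻¹ * g) C.one_mem
            (by have := C.inv_mem m2; simpa [mul_inv_rev] using this) h1 h2
          have h7 := C.mul_mem (C.inv_mem h6) (C.inv_mem m2)
          have e : (h⁻¹ * f)⁻¹ * (g⁻¹ * h)⁻¹ = f⁻¹ * g := by group
          rw [e] at h7
          exact n1 h7
      · -- both ∉ C
        have hfh : r f h := trans_of r hr1 hr2
        have m3 : f⁻¹ * h ∉ C := by
          intro hm
          have h1 : r 1 (f⁻¹ * g) := by
            have := (hrinv f⁻¹ f g).1 hr1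
            simpa using this
          have h2 : r (f⁻¹ * g) (f⁻¹ * h) := (hrinv f⁻¹ g h).1 hr2
          exact n1 (hC 1 (f⁻¹ * g) (f⁻¹ * h) C.one_mem hm h1 h2)
        exact Or.inr ⟨m3, hfh⟩
  -- trichotomy
  have htri : ∀ f g : G, r' f g ∨ f = g ∨ r' g f := by
    intro f g
    by_cases hm : f⁻¹ * g ∈ C
    · rcases trichotomous_of s 1 ⟨f⁻¹ * g, hm⟩ with h1 | h1 | h1
      · exact Or.inl (Or.inl ⟨hm, h1⟩)
      · refine Or.inr (Or.inl ?_)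
        have : f⁻¹ * g = 1 := by
          have := congrArg (Subtype.val) h1.symm
          simpa using this
        have := mul_eq_one_iff_inv_eq.1 this
        simpa [inv_inv] using congrArg (·⁻¹) this
      · refine Or.inr (Or.inr ?_)
        have hm' : g⁻¹ * f ∈ C := by
          have := C.inv_mem hm
          simpa [mul_inv_rev] using this
        refine Or.inl ⟨hm', ?_⟩
        have h2 : s 1 (⟨f⁻¹ * g, hm⟩ : C)⁻¹ := by
          have := (hsinv (⟨f⁻¹ * g, hm⟩ : C)⁻¹ ⟨f⁻¹ * g, hm⟩ 1).1 h1
          simpa using this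
        have heq : ((⟨f⁻¹ * g, hm⟩ : C)⁻¹) = (⟨g⁻¹ * f, hm'⟩ : C) := by
          ext; simp [mul_inv_rev]
        rwa [heq] at h2
    · have hm' : g⁻¹ * f ∉ C := by
        intro h
        have := C.inv_mem h
        simp [mul_inv_rev] at this
        exact hm this
      rcases trichotomous_of r f g with h1 | h1 | h1
      · exact Or.inl (Or.inr ⟨hm, h1⟩)
      · exact Or.inr (Or.inl h1)
      · exact Or.inr (Or.inr (Or.inr ⟨hm', h1⟩))
  -- left invariance
  have hinv : ∀ h f g : G, r' f g → r' (h * f) (h * g) := by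
    intro h f g hfg
    have e : (h * f)⁻¹ * (h * g) = f⁻¹ * g := by group
    show (∃ hm : (h * f)⁻¹ * (h * g) ∈ C, s 1 ⟨(h * f)⁻¹ * (h * g), hm⟩) ∨
      ((h * f)⁻¹ * (h * g) ∉ C ∧ r (h * f) (h * g))
    rw [e]
    rcases hfg with ⟨m1, hs1⟩ | ⟨n1, hr1⟩
    · exact Or.inl ⟨m1, hs1⟩
    · exact Or.inr ⟨n1, hr.2 h f g hr1⟩
  have hr'lo : IsLeftOrder r' := by
    refine ⟨?_, hinv⟩
    exact { trichotomous := fun a b h1 h2 => by rcases htri a b with h | h | h <;> first | exact absurd h h1 | exact h | exact absurd h h2, irrefl := hirr, trans := htr }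
  refine ⟨r', hr'lo, ?_, ?_⟩
  · -- agreement on T
    intro a ha b hb
    by_cases hm : a⁻¹ * b ∈ C
    · have hmemS : (⟨a⁻¹ * b, hm⟩ : C) ∈ S := by
        rw [hSdef]
        refine Finset.mem_insert_of_mem ?_
        refine Finset.mem_image.2 ⟨(a, b), Finset.mem_product.2 ⟨ha, hb⟩, ?_⟩
        simp [hm]
      have h1S : (1 : C) ∈ S := by rw [hSdef]; exact Finset.mem_insert_self _ _
      rw [hr'iff a b hm hm, hagree 1 h1S ⟨a⁻¹ * b, hm⟩ hmemS]
      simp only [OneMemClass.coe_one]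
      constructor
      · intro h
        have := hr.2 a _ _ h
        simpa [mul_assoc] using this
      · intro h
        have := hr.2 a⁻¹ _ _ h
        simpa using this
    · exact hr'iff' a b hm
  · -- r' ≠ r
    intro heq
    apply hne
    funext a b
    have hm : (a : G)⁻¹ * (b : G) ∈ C := by
      have := C.mul_mem (C.inv_mem a.2) b.2
      simpa using this
    have h1 : r' (a : G) (b : G) ↔ s 1 ⟨(a:G)⁻¹ * b, hm⟩ := hr'iff a b hm hm
    have h2 : s a b ↔ s 1 ⟨(a:G)⁻¹ * b, hm⟩ := by
      have := hsinv a⁻¹ a b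
      simp only [inv_mul_cancel] at this
      rw [this]
      congr! 2
    have h3 : r' (a : G) (b : G) ↔ r (a : G) (b : G) := by rw [heq]
    simp only [eq_iff_iff]
    rw [h2, ← h1, h3]
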